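/- Let P be a poset and P₀ ⊆ P. If every increasing net in P₀ having a supremum in P₀ has the same supremum in P, and every decreasing net in P₀ having an infimum in P₀ has the same infimum in P, then the subspace topology induced on P₀ by the order topology of P is coarser than the order topology of P₀. -/
import Mathlib


universe u

section NetDefs

variable {Γ P : Type u} [Preorder Γ] [Preorder P]

/-- A net `x` increases to `l`: it is monotone and `l` is its supremum. -/
def IncreasingTo (x : Γ → P) (l : P) : Prop :=
  Monotone x ∧ IsLUB (Set.range x) l

/-- A net `x` decreases to `l`: it is antitone and `l` is its infimum. -/
def DecreasingTo (x : Γ → P) (l : P) : Prop :=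
  Antitone x ∧ IsGLB (Set.range x) l

/-- Order convergence of a net in a poset: the net is sandwiched between a net
increasing to `l` and a net decreasing to `l`. -/
def OConvergesTo (x : Γ → P) (l : P) : Prop :=
  ∃ a b : Γ → P, (∀ γ, a γ ≤ x γ) ∧ (∀ γ, x γ ≤ b γ) ∧ IncreasingTo a l ∧ DecreasingTo b l

end NetDefs

/-- A set is o-closed if no net in it (indexed by a nonempty directed set) o-converges
to a point outside it. -/
def IsOClosed {P : Type u} [Preorder P] (X : Set P) : Prop :=
  ∀ (Γ : Type u) [Preorder Γ] [IsDirected Γ (· ≤ ·)] [Nonempty Γ],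
    ∀ (x : Γ → P) (l : P), (∀ γ, x γ ∈ X) → OConvergesTo x l → l ∈ X

/-- The order topology of a poset: the topology whose closed sets are the o-closed sets
(equivalently, the topology generated by the complements of o-closed sets). -/
def orderTopology (P : Type u) [Preorder P] : TopologicalSpace P :=
  TopologicalSpace.generateFrom {U | IsOClosed Uᶜ}

/-- The interval topology of a poset: the coarsest topology in which every ray
`[a,→)` and `(←,a]` is closed. -/
def intervalTopology (P : Type u) [Preorder P] : TopologicalSpace P :=
  TopologicalSpace.generateFrom {U | (∃ a : P, U = (Set.Ici a)ᶜ) ∨ ∃ a : P, U = (Set.Iic a)ᶜ}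


/-- Let `P₀ ⊆ P`. If every increasing net in `P₀` having a supremum in `P₀` has the same
supremum in `P`, and dually for decreasing nets and infima, then the subspace topology
induced on `P₀` by the order topology of `P` is coarser than the order topology of `P₀`. -/
theorem orderTopology_subspace_coarser {P : Type u} [PartialOrder P] (P₀ : Set P)
    (hsup : ∀ (Γ : Type u) [Preorder Γ] [IsDirected Γ (· ≤ ·)] [Nonempty Γ],
      ∀ (x : Γ → P₀) (l : P₀), Monotone x → IsLUB (Set.range x) l →
        IsLUB (Set.range fun γ => (x γ : P)) (l : P))
    (hinf : ∀ (Γ : Type u) [Preorder Γ] [IsDirected Γ (· ≤ ·)] [Nonempty Γ],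
      ∀ (x : Γ → P₀) (l : P₀), Antitone x → IsGLB (Set.range x) l →
        IsGLB (Set.range fun γ => (x γ : P)) (l : P)) :
    orderTopology P₀ ≤ TopologicalSpace.induced (Subtype.val : P₀ → P) (orderTopology P) := by
  simp only [orderTopology]
  rw [induced_generateFrom_eq]
  apply TopologicalSpace.generateFrom_anti
  rintro _ ⟨U, hU, rfl⟩
  show IsOClosed ((Subtype.val ⁻¹' U : Set P₀))ᶜ
  intro Γ _ _ _ x l hx ⟨a, b, hax, hxb, ⟨hamono, halub⟩, ⟨hbanti, hbglb⟩⟩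
  have hla := hsup Γ a l hamono halub
  have hlb := hinf Γ b l hbanti hbglb
  have : (l : P) ∈ Uᶜ := by
    refine hU Γ (fun γ => (x γ : P)) (l : P) (fun γ => hx γ) ?_
    exact ⟨fun γ => (a γ : P), fun γ => (b γ : P),
      fun γ => hax γ, fun γ => hxb γ,
      ⟨fun _ _ h => hamono h, hla⟩, ⟨fun _ _ h => hbanti h, hlb⟩⟩
  exact this
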